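/- Let u, v be positive words in {a,b}* with the same number of a's and the same number of b's, and let A, B be elements of a group satisfying B A B^{-1} = A^{-1}. Then for w = u^{-1}v one has w(A,B) = A^{(-1)^n (μ(v) - μ(u))}, where n is the common number of b's and μ is the signed a-count. In particular, if A and B additionally lie in SU(2) with A = diag(e^{iθ}, e^{-iθ}) and μ(u) ≠ μ(v), then choosing θ = π/(2|μ(v)-μ(u)|) gives tr(w(A,B)) = 0. -/

import Mathlib

def SU2 : Subgroup (Matrix.unitaryGroup (Fin 2) ℂ) where
  carrier := {A | (A : Matrix (Fin 2) (Fin 2) ℂ).det = 1}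
  one_mem' := by simp
  mul_mem' := by
    intro A B hA hB
    simp only [Set.mem_setOf_eq] at *
    rw [Matrix.UnitaryGroup.mul_val, Matrix.det_mul, hA, hB, one_mul]
  inv_mem' := by
    intro A hA
    simp only [Set.mem_setOf_eq] at *
    rw [Matrix.UnitaryGroup.inv_val]
    simp [Matrix.det_conjTranspose, star, hA]
    rfl

def SU2.mat (A : SU2) : Matrix (Fin 2) (Fin 2) ℂ := A.val.val

abbrev PosWord := List Bool

def evalPos {G : Type*} [Group G] (A B : G) (x : PosWord) : G :=
  (x.map (fun c => if c then A else B)).prod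

def mu : PosWord → ℤ
  | [] => 0
  | (true :: xs) => 1 + mu xs
  | (false :: xs) => - mu xs

lemma BA_comm {G : Type*} [Group G] {A B : G} (h : B * A * B⁻¹ = A⁻¹) (k : ℤ) :
    B * A ^ k = A ^ (-k) * B := by
  have h1 : (B * A * B⁻¹) ^ k = A ^ (-k) := by rw [h, inv_zpow, ← zpow_neg]
  rw [conj_zpow] at h1
  calc B * A ^ k = B * A ^ k * B⁻¹ * B := by group
    _ = A ^ (-k) * B := by rw [h1]

lemma Bn_conj {G : Type*} [Group G] {A B : G} (h : B * A * B⁻¹ = A⁻¹) (n : ℕ) (k : ℤ) :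
    (B ^ n)⁻¹ * A ^ k * B ^ n = A ^ ((-1 : ℤ) ^ n * k) := by
  induction n generalizing k with
  | zero => simp
  | succ n ih =>
    have hinv : B⁻¹ * A ^ k * B = A ^ (-k) := by
      have h2 := BA_comm h (-k)
      rw [neg_neg] at h2
      calc B⁻¹ * A ^ k * B = B⁻¹ * (A ^ k * B) := by group
        _ = B⁻¹ * (B * A ^ (-k)) := by rw [← h2]
        _ = A ^ (-k) := by group
    calc (B ^ (n+1))⁻¹ * A ^ k * B ^ (n+1)
        = (B ^ n)⁻¹ * (B⁻¹ * A ^ k * B) * B ^ n := by rw [pow_succ]; group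
      _ = (B ^ n)⁻¹ * A ^ (-k) * B ^ n := by rw [hinv]
      _ = A ^ ((-1 : ℤ) ^ n * (-k)) := ih (-k)
      _ = A ^ ((-1 : ℤ) ^ (n+1) * k) := by ring_nf

lemma evalPos_normal {G : Type*} [Group G] {A B : G} (h : B * A * B⁻¹ = A⁻¹) (x : PosWord) :
    evalPos A B x = A ^ (mu x) * B ^ (x.count false) := by
  induction x with
  | nil => simp [evalPos, mu]
  | cons c xs ih =>
    cases c with
    | true =>
      have he : evalPos A B (true :: xs) = A * evalPos A B xs := by simp [evalPos]
      rw [he, ih, mu, List.count_cons]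
      simp [← mul_assoc, ← zpow_one_add A]
    | false =>
      have he : evalPos A B (false :: xs) = B * evalPos A B xs := by simp [evalPos]
      rw [he, ih, mu]
      rw [← mul_assoc, BA_comm h, mul_assoc, ← pow_succ']
      congr 1
      simp [List.count_cons]

lemma key {G : Type*} [Group G] (u v : PosWord) (hb : u.count false = v.count false)
    (A B : G) (h : B * A * B⁻¹ = A⁻¹) :
    (evalPos A B u)⁻¹ * evalPos A B v
      = A ^ ((-1 : ℤ) ^ (u.count false) * (mu v - mu u)) := by
  rw [evalPos_normal h u, evalPos_normal h v, hb]
  have hc : (A ^ mu u * B ^ v.count false)⁻¹ * (A ^ mu v * B ^ v.count false)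
      = (B ^ v.count false)⁻¹ * A ^ (mu v - mu u) * B ^ v.count false := by
    rw [zpow_sub]; group
  rw [hc, Bn_conj h, ← hb]

lemma SU2.mat_inv (A : SU2) : SU2.mat A⁻¹ = star (SU2.mat A) :=
  Matrix.UnitaryGroup.inv_val A.val

lemma SU2.mat_mul (A B : SU2) : SU2.mat (A * B) = SU2.mat A * SU2.mat B := rfl

lemma mat_zpow (A : SU2) (θ : ℝ)
    (hA : SU2.mat A = Matrix.diagonal ![Complex.exp (θ * Complex.I), Complex.exp (-θ * Complex.I)])
    (m : ℤ) :
    SU2.mat (A ^ m) = Matrix.diagonal ![Complex.exp (m * θ * Complex.I), Complex.exp (-(m * θ) * Complex.I)] := by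
  have hAinv : SU2.mat A⁻¹ = Matrix.diagonal ![Complex.exp (-θ * Complex.I), Complex.exp (θ * Complex.I)] := by
    rw [SU2.mat_inv, hA, Matrix.star_eq_conjTranspose, Matrix.diagonal_conjTranspose,
      Matrix.diagonal_eq_diagonal_iff]
    intro i
    fin_cases i <;>
      simp [Pi.star_apply, ← Complex.exp_conj, map_mul, Complex.conj_I, Complex.conj_ofReal] <;> ring_nf
  induction m using Int.induction_on with
  | zero =>
    rw [zpow_zero]
    have h1 : SU2.mat (1 : SU2) = 1 := rfl
    rw [h1]
    ext i j
    fin_cases i <;> fin_cases j <;>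
      simp [Matrix.one_apply, Matrix.diagonal_apply]
  | succ k ih =>
    rw [zpow_add_one, SU2.mat_mul, ih, hA, Matrix.diagonal_mul_diagonal,
      Matrix.diagonal_eq_diagonal_iff]
    intro i
    fin_cases i <;> simp [← Complex.exp_add] <;> ring_nf
  | pred k ih =>
    rw [zpow_sub_one, SU2.mat_mul, ih, hAinv, Matrix.diagonal_mul_diagonal,
      Matrix.diagonal_eq_diagonal_iff]
    intro i
    fin_cases i <;> simp [← Complex.exp_add] <;> ring_nf

theorem mixed_normalizer_slice (u v : PosWord)
    (ha : u.count true = v.count true) (hb : u.count false = v.count false) :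
    (∀ (G : Type*) (_ : Group G) (A B : G), B * A * B⁻¹ = A⁻¹ →
      (evalPos A B u)⁻¹ * evalPos A B v
        = A ^ ((-1 : ℤ) ^ (u.count false) * (mu v - mu u))) ∧
    (∀ (A B : SU2) (θ : ℝ), B * A * B⁻¹ = A⁻¹ →
      SU2.mat A = Matrix.diagonal ![Complex.exp (θ * Complex.I), Complex.exp (-θ * Complex.I)] →
      mu u ≠ mu v → θ = Real.pi / (2 * |(mu v - mu u : ℤ)|) →
      Matrix.trace (SU2.mat ((evalPos A B u)⁻¹ * evalPos A B v)) = 0) := by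
  constructor
  · intro G _ A B h
    exact key u v hb A B h
  · intro A B θ h hA hmu hθ
    rw [key u v hb A B h, mat_zpow A θ hA]
    set m : ℤ := (-1 : ℤ) ^ (u.count false) * (mu v - mu u) with hm
    rw [Matrix.trace_diagonal, Fin.sum_univ_two]
    simp only [Matrix.cons_val_zero, Matrix.cons_val_one, Matrix.head_cons]
    have hcos : Complex.exp (m * θ * Complex.I) + Complex.exp (-(m * θ) * Complex.I)
        = 2 * Complex.cos (m * θ) := by
      rw [Complex.cos]; ring
    rw [hcos]
    have hreal : ((m : ℂ) * (θ : ℂ)) = (((m : ℝ) * θ : ℝ) : ℂ) := by push_cast; ring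
    rw [hreal, ← Complex.ofReal_cos]
    have hd : (mu v - mu u : ℤ) ≠ 0 := sub_ne_zero.mpr (Ne.symm hmu)
    have hdabs : (0 : ℝ) < |(mu v - mu u : ℤ)| := by exact_mod_cast abs_pos.mpr hd
    have hθpos : 0 ≤ θ := by rw [hθ]; positivity
    have hmabs : |(m : ℝ)| = ((|(mu v - mu u : ℤ)| : ℤ) : ℝ) := by
      rw [hm]; push_cast
      rw [abs_mul, abs_pow, abs_neg, abs_one, one_pow, one_mul]
    have habs : |(m : ℝ) * θ| = Real.pi / 2 := by
      have hc : ((|(mu v - mu u : ℤ)| : ℤ) : ℝ) ≠ 0 := ne_of_gt hdabs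
      have hc2 : |(mu v : ℝ) - (mu u : ℝ)| ≠ 0 := by push_cast at hc; exact hc
      rw [abs_mul, abs_of_nonneg hθpos, hmabs, hθ]
      field_simp
    have hzero : Real.cos ((m : ℝ) * θ) = 0 := by
      rw [← Real.cos_abs, habs, Real.cos_pi_div_two]
    rw [hzero]
    simp
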